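/- Let n ≥ 2 be an integer and let f ∈ S_r(ℝ^{n-1} × ℝ^{n-1}). Then for every ξ ∈ ℝ^{n-1} and v ∈ ℝ^{n-1}, 𝔉₁(Cf)(ξ, v) = 𝔉f(ξ, |v|·ξ) = 𝔉f(ξ, |ξ|·v). -/

import Mathlib

open MeasureTheory Complex
open scoped Real

noncomputable section

/-- `ℝ^{n-1}` as a Euclidean space. -/
abbrev Euc (n : ℕ) := EuclideanSpace ℝ (Fin (n - 1))

/-- `f` belongs to `S_r(ℝ^{n-1} × ℝ^{n-1})`: it is a Schwartz function which is
radial in the second variable. -/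
def IsSr (n : ℕ) (f : Euc n × Euc n → ℝ) : Prop :=
  (∃ g : SchwartzMap (Euc n × Euc n) ℝ, ⇑g = f) ∧
  ∀ (U : Euc n ≃ₗᵢ[ℝ] Euc n) (x y : Euc n), f (x, U y) = f (x, y)

/-- The cone transform `Cf(u,v) = ∫ f(u + |v|y, y) dy`. -/
def coneT (n : ℕ) (f : Euc n × Euc n → ℝ) : Euc n × Euc n → ℝ :=
  fun p => ∫ y : Euc n, f (p.1 + ‖p.2‖ • y, y)

/-- The Fourier transform of `f` in the first variable,
`𝔉₁f(ξ, y) = ∫ f(x, y) e^{-i x·ξ} dx`. -/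
def fourierFst (n : ℕ) (f : Euc n × Euc n → ℝ) (ξ y : Euc n) : ℂ :=
  ∫ x : Euc n, (f (x, y) : ℂ) * Complex.exp (-Complex.I * ((inner ℝ x ξ : ℝ) : ℂ))

/-- The full `2(n-1)`-dimensional Fourier transform
`𝔉f(ξ, η) = ∫∫ f(x, y) e^{-i (x·ξ + y·η)} dx dy`. -/
def fourierFull (n : ℕ) (f : Euc n × Euc n → ℝ) (ξ η : Euc n) : ℂ :=
  ∫ p : Euc n × Euc n,
    (f p : ℂ) * Complex.exp (-Complex.I * (((inner ℝ p.1 ξ + inner ℝ p.2 η : ℝ)) : ℂ))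

/-! ### Auxiliary lemmas -/

lemma norm_exp_neg_I_mul (r : ℝ) : ‖Complex.exp (-Complex.I * (r : ℂ))‖ = 1 := by
  rw [Complex.norm_exp]
  simp

/-- The Fourier integrand of a Schwartz function is integrable. -/
instance (n : ℕ) : (volume : Measure (Euc n × Euc n)).IsAddHaarMeasure := by
  rw [Measure.volume_eq_prod]
  exact Measure.prod.instIsAddHaarMeasure volume volume

lemma integrand_integrable (n : ℕ) (g : SchwartzMap (Euc n × Euc n) ℝ) (ξ η : Euc n) :
    Integrable (fun p : Euc n × Euc n =>
      ((g p : ℝ) : ℂ) * Complex.exp (-Complex.I *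
        (((inner ℝ p.1 ξ + inner ℝ p.2 η : ℝ)) : ℂ))) := by
  have hi : Integrable (fun p : Euc n × Euc n => g p) := g.integrable
  have hcont : Continuous (fun p : Euc n × Euc n =>
      ((g p : ℝ) : ℂ) * Complex.exp (-Complex.I *
        (((inner ℝ p.1 ξ + inner ℝ p.2 η : ℝ)) : ℂ))) := by
    refine (Complex.continuous_ofReal.comp g.continuous).mul ?_
    refine Complex.continuous_exp.comp ?_
    refine continuous_const.mul (Complex.continuous_ofReal.comp ?_)
    exact ((continuous_fst.inner continuous_const).add (continuous_snd.inner continuous_const))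
  refine hi.mono hcont.aestronglyMeasurable (ae_of_all _ fun p => ?_)
  rw [norm_mul, norm_exp_neg_I_mul, mul_one, Complex.norm_real]

/-- The full Fourier transform of a function radial in the second variable is
invariant under isometries in the second frequency variable. -/
lemma fourierFull_isometry (n : ℕ) (f : Euc n × Euc n → ℝ) (hf : IsSr n f)
    (ξ η : Euc n) (U : Euc n ≃ₗᵢ[ℝ] Euc n) :
    fourierFull n f ξ (U η) = fourierFull n f ξ η := by
  obtain ⟨⟨g, rfl⟩, hrad⟩ := hf
  set T : (Euc n × Euc n) ≃ₜ (Euc n × Euc n) :=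
    (Homeomorph.refl (Euc n)).prodCongr U.toHomeomorph with hT
  have hTP : MeasurePreserving T volume volume := by
    have h := (MeasurePreserving.id (volume : Measure (Euc n))).prod U.measurePreserving
    rw [Measure.volume_eq_prod]
    exact h
  have key := hTP.integral_comp T.measurableEmbedding
    (fun p : Euc n × Euc n => ((g p : ℝ) : ℂ) * Complex.exp (-Complex.I *
        (((inner ℝ p.1 ξ + inner ℝ p.2 (U η) : ℝ)) : ℂ)))
  rw [fourierFull, ← key]
  rw [fourierFull]
  congr 1
  funext p
  have h1 : g (T p) = g p := by
    have := hrad U p.1 p.2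
    simpa [hT, Homeomorph.prodCongr, Prod.map] using this
  have h2 : (inner ℝ ((T p).1) ξ : ℝ) = inner ℝ p.1 ξ := by simp [hT, Homeomorph.prodCongr]
  have h3 : (inner ℝ ((T p).2) (U η) : ℝ) = inner ℝ p.2 η := by
    simp only [hT, Homeomorph.prodCongr]
    exact U.inner_map_map p.2 η
  rw [h1, h2, h3]

/-- The full Fourier transform depends only on the norm of the second frequency variable. -/
lemma fourierFull_norm_eq (n : ℕ) (f : Euc n × Euc n → ℝ) (hf : IsSr n f)
    (ξ : Euc n) {a b : Euc n} (h : ‖a‖ = ‖b‖) :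
    fourierFull n f ξ a = fourierFull n f ξ b := by
  rw [← Submodule.reflection_sub h]
  exact (fourierFull_isometry n f hf ξ a _).symm

/-- The shear `(x, y) ↦ (x + c y, y)` as a homeomorphism. -/
def shearT (n : ℕ) (c : ℝ) : (Euc n × Euc n) ≃ₜ (Euc n × Euc n) where
  toFun p := (p.1 + c • p.2, p.2)
  invFun p := (p.1 - c • p.2, p.2)
  left_inv p := by simp
  right_inv p := by simp
  continuous_toFun :=
    by fun_prop
  continuous_invFun :=
    by fun_prop

lemma shearT_measurePreserving (n : ℕ) (c : ℝ) :
    MeasurePreserving (shearT n c) volume volume := by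
  have h1 : MeasurePreserving (Prod.swap : Euc n × Euc n → Euc n × Euc n)
      (volume.prod volume) (volume.prod volume) := Measure.measurePreserving_swap
  have h2 : MeasurePreserving (fun q : Euc n × Euc n => (q.1, q.2 + c • q.1))
      (volume.prod volume) (volume.prod volume) := by
    refine (MeasurePreserving.id (volume : Measure (Euc n))).skew_product
      (g := fun (a x : Euc n) => x + c • a) ?_ (ae_of_all _ fun a => ?_)
    · exact measurable_snd.add (measurable_fst.const_smul c)
    · exact map_add_right_eq_self volume (c • a)
  have heq : ⇑(shearT n c) =
      Prod.swap ∘ (fun q : Euc n × Euc n => (q.1, q.2 + c • q.1)) ∘ Prod.swap := by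
    funext p
    simp [shearT]
  rw [Measure.volume_eq_prod, heq]
  exact (h1.comp h2).comp h1

/-- **Fourier slice theorem for the cone transform.**
For `f ∈ S_r(ℝ^{n-1} × ℝ^{n-1})`, `𝔉₁(Cf)(ξ, v) = 𝔉f(ξ, |v|ξ) = 𝔉f(ξ, |ξ|v)`. -/
theorem fourier_slice_cone (n : ℕ) (hn : 2 ≤ n) (f : Euc n × Euc n → ℝ)
    (hf : IsSr n f) (ξ v : Euc n) :
    fourierFst n (coneT n f) ξ v = fourierFull n f ξ (‖v‖ • ξ) ∧
    fourierFull n f ξ (‖v‖ • ξ) = fourierFull n f ξ (‖ξ‖ • v) := by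
  constructor
  · -- Part 1
    obtain ⟨⟨g, hg⟩, hrad⟩ := hf
    set c : ℝ := ‖v‖ with hc
    set G : Euc n × Euc n → ℂ := fun p => ((f p : ℝ) : ℂ) * Complex.exp (-Complex.I *
        (((inner ℝ p.1 ξ + inner ℝ p.2 (-(c • ξ)) : ℝ)) : ℂ)) with hG
    have hGint : Integrable G := by
      rw [hG, ← hg]
      exact integrand_integrable n g ξ (-(c • ξ))
    have hS : MeasurePreserving (shearT n c) volume volume := shearT_measurePreserving n c
    have hGS : Integrable (G ∘ (shearT n c)) volume :=
      (hS.integrable_comp_emb (shearT n c).measurableEmbedding).mpr hGint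
    have hGSeq : (G ∘ (shearT n c)) = fun p : Euc n × Euc n =>
        ((f (p.1 + c • p.2, p.2) : ℝ) : ℂ) * Complex.exp (-Complex.I *
          (((inner ℝ p.1 ξ : ℝ)) : ℂ)) := by
      funext p
      simp only [hG, Function.comp_apply, shearT, Homeomorph.homeomorph_mk_coe, Equiv.coe_fn_mk]
      have h4 : (inner ℝ (p.1 + c • p.2) ξ : ℝ) + inner ℝ p.2 (-(c • ξ)) = inner ℝ p.1 ξ := by
        rw [inner_add_left, inner_neg_right, real_inner_smul_left, real_inner_smul_right]
        ring
      rw [h4]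
    have step1 : fourierFst n (coneT n f) ξ v =
        ∫ x : Euc n, ∫ y : Euc n, ((f (x + c • y, y) : ℝ) : ℂ) * Complex.exp (-Complex.I *
          (((inner ℝ x ξ : ℝ)) : ℂ)) := by
      rw [fourierFst]
      congr 1
      funext x
      simp only [coneT]
      rw [integral_mul_const]
      congr 1
      exact integral_ofReal.symm
    have step2 : (∫ x : Euc n, ∫ y : Euc n, ((f (x + c • y, y) : ℝ) : ℂ) * Complex.exp
          (-Complex.I * (((inner ℝ x ξ : ℝ)) : ℂ))) = ∫ p, G ((shearT n c) p) := by
      have hunc : Integrable (Function.uncurry fun x y : Euc n =>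
          ((f (x + c • y, y) : ℝ) : ℂ) * Complex.exp (-Complex.I *
          (((inner ℝ x ξ : ℝ)) : ℂ))) (volume.prod volume) := by
        have : (Function.uncurry fun x y : Euc n =>
            ((f (x + c • y, y) : ℝ) : ℂ) * Complex.exp (-Complex.I *
            (((inner ℝ x ξ : ℝ)) : ℂ))) = G ∘ (shearT n c) := by
          rw [hGSeq]; rfl
        rw [this, ← Measure.volume_eq_prod]
        exact hGS
      rw [MeasureTheory.integral_integral hunc, ← Measure.volume_eq_prod]
      exact integral_congr_ae (ae_of_all _ fun p => (congrFun hGSeq p).symm)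
    have step3 : (∫ p, G ((shearT n c) p)) = fourierFull n f ξ (-(c • ξ)) := by
      rw [hS.integral_comp (shearT n c).measurableEmbedding G, fourierFull]
    rw [step1, step2, step3]
    exact fourierFull_norm_eq n f ⟨⟨g, hg⟩, hrad⟩ ξ (by simp)
  · -- Part 2
    refine fourierFull_norm_eq n f hf ξ ?_
    rw [norm_smul, norm_smul, norm_norm, norm_norm, mul_comm]

end
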